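/- The Demazure–Lustig operators satisfy the braid relation T_i T_{i+1} T_i = T_{i+1} T_i T_{i+1} for 1 ≤ i ≤ n−2, as operators on polynomials in z₁,…,z_n over ℚ(t). -/

import Mathlib

open MvPolynomial

/-- The parameter `t`, a transcendental element of the field `ℚ(t)`. -/
noncomputable def tp : RatFunc ℚ := RatFunc.X

/-- Swap two variables in a polynomial. -/
noncomputable def swapVars {m : ℕ} (a b : Fin m)
    (f : MvPolynomial (Fin m) (RatFunc ℚ)) : MvPolynomial (Fin m) (RatFunc ℚ) :=
  rename (Equiv.swap a b) f

/-- The Demazure–Lustig operators satisfy the braid relation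
`T_i T_{i+1} T_i = T_{i+1} T_i T_{i+1}`.  Here `T` is the operator `T_i`,
acting on the adjacent variable pair `(z_i, z_{i+1})`, and `S` is `T_{i+1}`,
acting on `(z_{i+1}, z_{i+2})`; each is characterised by the (division-cleared)
defining identity of `T_j = t + ((t z_j − z_{j+1})/(z_j − z_{j+1}))(s_j − 1)`. -/
theorem demazure_lustig_braid (n : ℕ) (i : Fin n)
    (T S : MvPolynomial (Fin (n + 2)) (RatFunc ℚ) → MvPolynomial (Fin (n + 2)) (RatFunc ℚ))
    (hT : ∀ f, (X i.castSucc.castSucc - X i.castSucc.succ) * T f =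
        C tp * (X i.castSucc.castSucc - X i.castSucc.succ) * f
          + (C tp * X i.castSucc.castSucc - X i.castSucc.succ)
              * (swapVars i.castSucc.castSucc i.castSucc.succ f - f))
    (hS : ∀ f, (X i.castSucc.succ - X i.succ.succ) * S f =
        C tp * (X i.castSucc.succ - X i.succ.succ) * f
          + (C tp * X i.castSucc.succ - X i.succ.succ)
              * (swapVars i.castSucc.succ i.succ.succ f - f)) :
    ∀ f, T (S (T f)) = S (T (S f)) := by
  intro f
  set a := i.castSucc.castSucc with ha
  set b := i.castSucc.succ with hb
  set c := i.succ.succ with hc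
  have hab : a ≠ b := by
    simp only [ha, hb, ne_eq, Fin.ext_iff, Fin.coe_castSucc, Fin.val_succ]; omega
  have hbc : b ≠ c := by
    simp only [hb, hc, ne_eq, Fin.ext_iff, Fin.coe_castSucc, Fin.val_succ]; omega
  have hac : a ≠ c := by
    simp only [ha, hc, ne_eq, Fin.ext_iff, Fin.coe_castSucc, Fin.val_succ]; omega
  have hca : c ≠ a := hac.symm
  have hcb : c ≠ b := hbc.symm
  have hba : b ≠ a := hab.symm
  simp only [swapVars] at hT hS
  -- double-swap identities
  have hss1 : rename (⇑(Equiv.swap a b)) (rename (⇑(Equiv.swap a b)) f) = f := by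
    rw [rename_rename]
    have h : (⇑(Equiv.swap a b) ∘ ⇑(Equiv.swap a b)) = id := by
      funext x; simp
    rw [h, rename_id, AlgHom.id_apply]
  have hss2 : rename (⇑(Equiv.swap b c)) (rename (⇑(Equiv.swap b c)) f) = f := by
    rw [rename_rename]
    have h : (⇑(Equiv.swap b c) ∘ ⇑(Equiv.swap b c)) = id := by
      funext x; simp
    rw [h, rename_id, AlgHom.id_apply]
  -- the braid identity for the variable swaps
  have perm : Equiv.swap a b * Equiv.swap b c * Equiv.swap a b
      = Equiv.swap b c * Equiv.swap a b * Equiv.swap b c := by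
    calc Equiv.swap a b * Equiv.swap b c * Equiv.swap a b
        = Equiv.swap b a * Equiv.swap c b * Equiv.swap b a := by
          rw [Equiv.swap_comm a b, Equiv.swap_comm b c]
      _ = Equiv.swap a c := Equiv.swap_mul_swap_mul_swap hcb hca
      _ = Equiv.swap c a := Equiv.swap_comm a c
      _ = Equiv.swap b c * Equiv.swap a b * Equiv.swap b c :=
          (Equiv.swap_mul_swap_mul_swap hab hac).symm
  have hbr : rename (⇑(Equiv.swap a b)) (rename (⇑(Equiv.swap b c))
        (rename (⇑(Equiv.swap a b)) f))
      = rename (⇑(Equiv.swap b c)) (rename (⇑(Equiv.swap a b))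
        (rename (⇑(Equiv.swap b c)) f)) := by
    simp only [rename_rename]
    have hfun : ⇑(Equiv.swap a b) ∘ ⇑(Equiv.swap b c) ∘ ⇑(Equiv.swap a b)
        = ⇑(Equiv.swap b c) ∘ ⇑(Equiv.swap a b) ∘ ⇑(Equiv.swap b c) := by
      funext x
      simpa [Equiv.Perm.mul_apply, Function.comp] using DFunLike.congr_fun perm x
    rw [hfun]
  -- defining identities and their images under the swaps
  have h1 := hT (S (T f))
  have h2 := hS (T f)
  have h4 := hT f
  have k1 := hS (T (S f))
  have k2 := hT (S f)
  have k4 := hS f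
  have h3 := congrArg (rename (⇑(Equiv.swap a b))) h2
  have h5 := congrArg (rename (⇑(Equiv.swap b c))) h4
  have h6 := congrArg (rename (⇑(Equiv.swap a b))) h4
  have k3 := congrArg (rename (⇑(Equiv.swap b c))) k2
  have k5 := congrArg (rename (⇑(Equiv.swap a b))) k4
  have k6 := congrArg (rename (⇑(Equiv.swap b c))) k4
  simp only [map_mul, map_add, map_sub, rename_X, rename_C,
    Equiv.swap_apply_left, Equiv.swap_apply_right,
    Equiv.swap_apply_of_ne_of_ne hca hcb,
    Equiv.swap_apply_of_ne_of_ne hab hac,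
    hss1, hss2] at h3 h5 h6 k3 k5 k6
  have h7 := congrArg (rename (⇑(Equiv.swap a b))) h5
  have k7 := congrArg (rename (⇑(Equiv.swap b c))) k5
  simp only [map_mul, map_add, map_sub, rename_X, rename_C,
    Equiv.swap_apply_left, Equiv.swap_apply_right,
    Equiv.swap_apply_of_ne_of_ne hca hcb,
    Equiv.swap_apply_of_ne_of_ne hab hac] at h7 k7
  -- nonvanishing of the variable differences
  have hD1 : (X a - X b : MvPolynomial (Fin (n + 2)) (RatFunc ℚ)) ≠ 0 :=
    sub_ne_zero.mpr fun h => hab (MvPolynomial.X_injective h)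
  have hD2 : (X b - X c : MvPolynomial (Fin (n + 2)) (RatFunc ℚ)) ≠ 0 :=
    sub_ne_zero.mpr fun h => hbc (MvPolynomial.X_injective h)
  have hD3 : (X a - X c : MvPolynomial (Fin (n + 2)) (RatFunc ℚ)) ≠ 0 :=
    sub_ne_zero.mpr fun h => hac (MvPolynomial.X_injective h)
  have hM : (((X a - X b) * (X b - X c) * (X a - X c)) ^ 2 :
      MvPolynomial (Fin (n + 2)) (RatFunc ℚ)) ≠ 0 :=
    pow_ne_zero _ (mul_ne_zero (mul_ne_zero hD1 hD2) hD3)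
  apply mul_left_cancel₀ hM
  linear_combination
      (X a - X b) * (X b - X c) ^ 2 * (X a - X c) ^ 2 * h1
    + (X a - X b) * (X b - X c) * (X a - X c) ^ 2
        * (C tp * (X a - X b) - (C tp * X a - X b)) * h2
    + (C tp * X a - X b) * (X a - X b) * (X b - X c) ^ 2 * (X a - X c) * h3
    + (X b - X c) * (X a - X c) ^ 2 * (C tp * (X a - X b) - (C tp * X a - X b))
        * (C tp * (X b - X c) - (C tp * X b - X c)) * h4
    + (X a - X b) * (X b - X c) * (X a - X c)
        * (C tp * (X a - X b) - (C tp * X a - X b)) * (C tp * X b - X c) * h5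
    - (C tp * X a - X b) * (X b - X c) ^ 2 * (X a - X c)
        * (C tp * (X a - X c) - (C tp * X a - X c)) * h6
    + (C tp * X a - X b) * (X a - X b) * (X b - X c) * (X a - X c)
        * (C tp * X a - X c) * h7
    - (X a - X b) ^ 2 * (X b - X c) * (X a - X c) ^ 2 * k1
    - (X a - X b) * (X b - X c) * (X a - X c) ^ 2
        * (C tp * (X b - X c) - (C tp * X b - X c)) * k2
    - (X a - X b) ^ 2 * (X b - X c) * (X a - X c) * (C tp * X b - X c) * k3
    - (X a - X b) * (X a - X c) ^ 2 * (C tp * (X b - X c) - (C tp * X b - X c))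
        * (C tp * (X a - X b) - (C tp * X a - X b)) * k4
    - (X a - X b) * (X b - X c) * (X a - X c)
        * (C tp * (X b - X c) - (C tp * X b - X c)) * (C tp * X a - X b) * k5
    + (X a - X b) ^ 2 * (X a - X c) * (C tp * X b - X c)
        * (C tp * (X a - X c) - (C tp * X a - X c)) * k6
    - (X a - X b) * (X b - X c) * (X a - X c) * (C tp * X b - X c)
        * (C tp * X a - X c) * k7
    + (X a - X b) * (X b - X c) * (X a - X c) * (C tp * X a - X b)
        * (C tp * X b - X c) * (C tp * X a - X c) * hbr
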